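/- Consider the CTRS R over constants a, b, unary symbol g, and binary symbol f, with rules g(x) → f(x,x) and (g(x) → g(x) ⇐ g(x) → f(a,b)) under the reachability semantics. Then the condition g(x) →* f(a,b) is infeasible: there is no term t such that g(t) →*_R f(a,b). -/
import Mathlib


/-- Terms over the signature with constants `a`, `b`, unary symbol `g` and binary
symbol `f`. -/
inductive Tm where
  | a | b
  | g (t : Tm)
  | f (t₁ t₂ : Tm)

mutual
  /-- The one-step rewrite relation of the CTRS with rules `g(x) → f(x,x)` and
  `g(x) → g(x) ⇐ g(x) → f(a,b)` under the reachability semantics: rule instances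
  (whose conditions hold w.r.t. `Rews`) closed under contexts. -/
  inductive Rew : Tm → Tm → Prop where
    | rule1 (x : Tm) : Rew (.g x) (.f x x)
    | rule2 (x : Tm) : Rews (.g x) (.f .a .b) → Rew (.g x) (.g x)
    | g_congr {t t'} : Rew t t' → Rew (.g t) (.g t')
    | f_congr_l {t t'} (u : Tm) : Rew t t' → Rew (.f t u) (.f t' u)
    | f_congr_r (u : Tm) {t t'} : Rew t t' → Rew (.f u t) (.f u t')

  /-- The many-step rewrite relation: reflexive and closed under prepending
  one-step rewrites. -/
  inductive Rews : Tm → Tm → Prop where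
    | refl (t : Tm) : Rews t t
    | step {s u t : Tm} : Rew s u → Rews u t → Rews s t
end

/-- Nothing many-step rewrites to `a` except `a` itself. -/
lemma rews_to_a : ∀ {s t : Tm}, Rews s t → t = Tm.a → s = Tm.a := by
  intro s t h
  refine Rews.rec (motive_1 := fun _ t _ => t = Tm.a → False)
    (motive_2 := fun s t _ => t = Tm.a → s = Tm.a)
    ?_ ?_ ?_ ?_ ?_ ?_ ?_ h
  · intro x hx; exact Tm.noConfusion hx
  · intro x _ _ hx; exact Tm.noConfusion hx
  · intro t t' _ _ hx; exact Tm.noConfusion hx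
  · intro t t' u _ _ hx; exact Tm.noConfusion hx
  · intro u t t' _ _ hx; exact Tm.noConfusion hx
  · intro t ht; exact ht
  · intro s u t _ _ ih1 ih2 ht; exact (ih1 (ih2 ht)).elim

/-- Nothing many-step rewrites to `b` except `b` itself. -/
lemma rews_to_b : ∀ {s t : Tm}, Rews s t → t = Tm.b → s = Tm.b := by
  intro s t h
  refine Rews.rec (motive_1 := fun _ t _ => t = Tm.b → False)
    (motive_2 := fun s t _ => t = Tm.b → s = Tm.b)
    ?_ ?_ ?_ ?_ ?_ ?_ ?_ h
  · intro x hx; exact Tm.noConfusion hx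
  · intro x _ _ hx; exact Tm.noConfusion hx
  · intro t t' _ _ hx; exact Tm.noConfusion hx
  · intro t t' u _ _ hx; exact Tm.noConfusion hx
  · intro u t t' _ _ hx; exact Tm.noConfusion hx
  · intro t ht; exact ht
  · intro s u t _ _ ih1 ih2 ht; exact (ih1 (ih2 ht)).elim

/-- Transitivity of the many-step rewrite relation. -/
lemma rews_trans : ∀ {s u : Tm}, Rews s u → ∀ {t : Tm}, Rews u t → Rews s t := by
  intro s u h
  refine Rews.rec (motive_1 := fun _ _ _ => True)
    (motive_2 := fun s u _ => ∀ {t : Tm}, Rews u t → Rews s t)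
    ?_ ?_ ?_ ?_ ?_ ?_ ?_ h
  · intro _; trivial
  · intro _ _ _; trivial
  · intro _ _ _ _; trivial
  · intro _ _ _ _ _; trivial
  · intro _ _ _ _ _; trivial
  · intro _ _ h2; exact h2
  · intro s m u hr _ _ ih t h2; exact .step hr (ih h2)

/-- Many-step rewriting from an `f`-headed term stays `f`-headed and
rewrites the components. -/
lemma rews_f : ∀ {s w : Tm}, Rews s w → ∀ u v : Tm, s = Tm.f u v →
    ∃ u' v', w = Tm.f u' v' ∧ Rews u u' ∧ Rews v v' := by
  intro s w h
  refine Rews.rec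
    (motive_1 := fun s w _ => ∀ u v : Tm, s = Tm.f u v →
      ∃ u' v', w = Tm.f u' v' ∧ Rews u u' ∧ Rews v v')
    (motive_2 := fun s w _ => ∀ u v : Tm, s = Tm.f u v →
      ∃ u' v', w = Tm.f u' v' ∧ Rews u u' ∧ Rews v v')
    ?_ ?_ ?_ ?_ ?_ ?_ ?_ h
  · intro x u v hx; exact Tm.noConfusion hx
  · intro x _ _ u v hx; exact Tm.noConfusion hx
  · intro t t' _ _ u v hx; exact Tm.noConfusion hx
  · intro t t' u0 hr _ u v hx
    injection hx with h1 h2; subst h1; subst h2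
    exact ⟨t', u0, rfl, .step hr (.refl _), .refl _⟩
  · intro u0 t t' hr _ u v hx
    injection hx with h1 h2; subst h1; subst h2
    exact ⟨u0, t', rfl, .refl _, .step hr (.refl _)⟩
  · intro t u v ht; exact ⟨u, v, ht, .refl _, .refl _⟩
  · intro s m w hr _ ih1 ih2 u v hs
    obtain ⟨u'', v'', rfl, hu, hv⟩ := ih1 u v hs
    obtain ⟨u', v', rfl, hu', hv'⟩ := ih2 u'' v'' rfl
    exact ⟨u', v', rfl, rews_trans hu hu', rews_trans hv hv'⟩

/-- The condition `g(x) →* f(a,b)` of the conditional critical pair is infeasible: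
there is no term `t` such that `g(t) →*_R f(a,b)`. -/
theorem condition_infeasible : ¬ ∃ t : Tm, Rews (.g t) (.f .a .b) := by
  rintro ⟨t, h⟩
  refine Rews.rec (motive_1 := fun _ _ _ => True)
    (motive_2 := fun s w _ => ∀ t : Tm, s = Tm.g t → w = Tm.f Tm.a Tm.b → False)
    ?_ ?_ ?_ ?_ ?_ ?_ ?_ h t rfl rfl
  · intro _; trivial
  · intro _ _ _; trivial
  · intro _ _ _ _; trivial
  · intro _ _ _ _ _; trivial
  · intro _ _ _ _ _; trivial
  · intro u t ht hw; subst ht; exact Tm.noConfusion hw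
  · intro s m w hr hm _ ih t hs hw
    subst hs; subst hw
    cases hr with
    | rule1 =>
      obtain ⟨u', v', hfab, hu, hv⟩ := rews_f hm t t rfl
      obtain ⟨ha, hb⟩ := Tm.f.inj hfab
      have h1 : t = Tm.a := rews_to_a hu ha.symm
      have h2 : t = Tm.b := rews_to_b hv hb.symm
      exact Tm.noConfusion (h1 ▸ h2)
    | rule2 _ => exact ih t rfl rfl
    | g_congr _ => exact ih _ rfl rfl
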